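/- Let S be a 3×3 real matrix and E < 0 a real number such that S³ = -E·S. Then for all t ∈ ℝ, exp(t·S) = I + (sinh(t√(-E))/√(-E))·S + ((cosh(t√(-E)) - 1)/(-E))·S². -/

import Mathlib

open NormedSpace

theorem stmt_7 (S : Matrix (Fin 3) (Fin 3) ℝ) (E : ℝ) (hE : E < 0)
    (hS : S ^ 3 = -E • S) (t : ℝ) :
    exp (t • S) =
      1 + (Real.sinh (t * Real.sqrt (-E)) / Real.sqrt (-E)) • S +
        ((Real.cosh (t * Real.sqrt (-E)) - 1) / (-E)) • S ^ 2 := by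
  set ω : ℝ := Real.sqrt (-E) with hω
  have hEpos : (0:ℝ) < -E := by linarith
  have hωpos : 0 < ω := Real.sqrt_pos.mpr hEpos
  have hωne : ω ≠ 0 := ne_of_gt hωpos
  have hω2 : ω ^ 2 = -E := Real.sq_sqrt hEpos.le
  -- powers of S
  have Sodd : ∀ k : ℕ, S ^ (2 * k + 1) = ((-E) ^ k) • S := by
    intro k
    induction k with
    | zero => simp
    | succ k ih =>
      have : 2 * (k + 1) + 1 = (2 * k + 1) + 2 := by ring
      rw [this, pow_add, ih, Matrix.smul_mul, ← pow_succ' (M := Matrix (Fin 3) (Fin 3) ℝ) S 2,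
        hS, smul_smul, pow_succ, mul_comm]
  have Seven : ∀ k : ℕ, S ^ (2 * k + 2) = ((-E) ^ k) • S ^ 2 := by
    intro k
    have : 2 * k + 2 = (2 * k + 1) + 1 := by ring
    rw [this, pow_succ, Sodd, Matrix.smul_mul, ← pow_two]
  -- the exponential series terms
  set f : ℕ → Matrix (Fin 3) (Fin 3) ℝ := fun n => ((n.factorial : ℝ)⁻¹) • (t • S) ^ n with hf
  have hfn : ∀ n, f n = (t ^ n / (n.factorial : ℝ)) • S ^ n := by
    intro n
    rw [hf]
    simp [smul_pow, smul_smul, div_eq_inv_mul]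
  -- odd part
  have hodd : HasSum (fun k => f (2 * k + 1))
      ((Real.sinh (t * ω) / ω) • S) := by
    have h := ((Real.hasSum_sinh (t * ω)).div_const ω).smul_const S
    convert h using 2 with k
    rw [hfn, Sodd, smul_smul]
    congr 1
    rw [← hω2, mul_pow, ← pow_mul]
    have h1 : ((2 * k + 1).factorial : ℝ) ≠ 0 := by positivity
    field_simp
    ring
  -- even part, shifted by one
  have heven' : HasSum (fun k => f (2 * (k + 1)))
      (((Real.cosh (t * ω) - 1) / (-E)) • S ^ 2) := by
    have h0 := (hasSum_nat_add_iff' (f := fun k => (t * ω) ^ (2 * k) / ((2 * k).factorial : ℝ)) 1).mpr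
      (Real.hasSum_cosh (t * ω))
    simp only [Finset.range_one, Finset.sum_singleton, mul_zero, pow_zero, Nat.factorial_zero,
      Nat.cast_one, div_one] at h0
    have h := (h0.div_const (-E)).smul_const (S ^ 2)
    convert h using 2 with k
    rw [hfn]
    have h2 : 2 * (k + 1) = 2 * k + 2 := by ring
    rw [h2, Seven, smul_smul]
    congr 1
    rw [← hω2, mul_pow, ← pow_mul]
    have h1 : ((2 * k + 2).factorial : ℝ) ≠ 0 := by positivity
    field_simp
    ring
  have heven : HasSum (fun k => f (2 * k))
      (((Real.cosh (t * ω) - 1) / (-E)) • S ^ 2 + 1) := by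
    have h := (hasSum_nat_add_iff (f := fun k => f (2 * k))
      (g := ((Real.cosh (t * ω) - 1) / (-E)) • S ^ 2) 1).mp heven'
    simpa [hf] using h
  have htot : HasSum f
      ((((Real.cosh (t * ω) - 1) / (-E)) • S ^ 2 + 1) + (Real.sinh (t * ω) / ω) • S) :=
    HasSum.even_add_odd heven hodd
  have hexp : exp (t • S) = ∑' n, f n := by rw [exp_eq_tsum ℝ]
  rw [hexp, htot.tsum_eq]
  abel
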